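/- No complete folding sequence is periodic: if (a_h)_{h∈ℤ} is a complete folding sequence and r ∈ ℤ satisfies a_{h+r} = a_h for all h ∈ ℤ, then r = 0. -/

import Mathlib

/-- Reversal-with-negation of a finite ±1 word. -/
def negRev (S : List ℤ) : List ℤ := (S.map (fun x => -x)).reverse

/-- `IsFold n S` : `S` is an `n`-folding sequence. -/
inductive IsFold : ℕ → List ℤ → Prop
  | zero : IsFold 0 []
  | succ (n : ℕ) (S : List ℤ) (ε : ℤ) : IsFold n S → (ε = 1 ∨ ε = -1) →
      IsFold (n + 1) (negRev S ++ ε :: S)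

/-- The subword `(a (h+1), …, a (h+t))` of a bi-infinite sequence. -/
def subwordAt (a : ℤ → ℤ) (h : ℤ) (t : ℕ) : List ℤ :=
  (List.range t).map fun i => a (h + 1 + (i : ℤ))

/-- `T` is a finite subword of the bi-infinite sequence `a`. -/
def IsSubword (a : ℤ → ℤ) (T : List ℤ) : Prop := ∃ h : ℤ, T = subwordAt a h T.length

/-- A finite folding sequence: a subword of some `n`-folding sequence. -/
def IsFiniteFold (T : List ℤ) : Prop := ∃ n S, IsFold n S ∧ T <:+: S

/-- The sequence takes values in `{+1, -1}`. -/
def PM (a : ℤ → ℤ) : Prop := ∀ h : ℤ, a h = 1 ∨ a h = -1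

/-- `a (hn + k·2^(n+1)) = (-1)^k · a hn` for all `k`. -/
def AltProp (a : ℤ → ℤ) (n : ℕ) (hn : ℤ) : Prop :=
  ∀ k : ℤ, a (hn + k * 2 ^ (n + 1)) = if Even k then a hn else -a hn

/-- A complete folding sequence (alternation characterization). -/
def CompleteFold (a : ℤ → ℤ) : Prop := PM a ∧ ∀ n : ℕ, ∃ hn : ℤ, AltProp a n hn

/-- Rotate a direction left (`η = 1`) or right (otherwise). -/
def rot (d : ℤ × ℤ) (η : ℤ) : ℤ × ℤ := if η = 1 then (-d.2, d.1) else (d.2, -d.1)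

/-- Unit lattice direction. -/
def IsUnitVec (d : ℤ × ℤ) : Prop := d = (1, 0) ∨ d = (0, 1) ∨ d = (-1, 0) ∨ d = (0, -1)

/-- Direction of the `i`-th step of the curve with turn word `η`. -/
def dirAt (d0 : ℤ × ℤ) (η : List ℤ) (i : ℕ) : ℤ × ℤ := (η.take i).foldl rot d0

/-- `i`-th vertex of the curve started at `X0` with initial direction `d0`. -/
def vertexAt (X0 d0 : ℤ × ℤ) (η : List ℤ) (i : ℕ) : ℤ × ℤ :=
  X0 + ∑ j ∈ Finset.range i, dirAt d0 η j

/-- `i`-th (unordered) unit edge of the curve. -/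
def edgeAt (X0 d0 : ℤ × ℤ) (η : List ℤ) (i : ℕ) : Sym2 (ℤ × ℤ) :=
  s(vertexAt X0 d0 η i, vertexAt X0 d0 η (i + 1))

/-- A complete folding curve, given by its vertex function. -/
def IsCFCurve (V : ℤ → ℤ × ℤ) : Prop :=
  (∀ i : ℤ, IsUnitVec (V (i + 1) - V i)) ∧
  ∃ η : ℤ → ℤ, CompleteFold η ∧ ∀ i : ℤ, V (i + 2) - V (i + 1) = rot (V (i + 1) - V i) (η i)

/-- Two bi-infinite curves are disjoint: no common unit edge, and at every common
lattice point the four incident traversed edges point in four distinct directions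
(the curves do not cross). -/
def CurvesDisjoint (V W : ℤ → ℤ × ℤ) : Prop :=
  (∀ i j : ℤ, s(V i, V (i + 1)) ≠ s(W j, W (j + 1))) ∧
  ∀ i j : ℤ, V i = W j →
    List.Pairwise (· ≠ ·) [V (i - 1) - V i, V (i + 1) - V i, W (j - 1) - W j, W (j + 1) - W j]

theorem statement8 (a : ℤ → ℤ) (ha : CompleteFold a) (r : ℤ)
    (hper : ∀ h : ℤ, a (h + r) = a h) : r = 0 := by
  by_contra hr
  obtain ⟨hpm, halt⟩ := ha
  have hper' : ∀ (c : ℤ) (h : ℤ), a (h + c * r) = a h := by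
    intro c
    induction c using Int.induction_on with
    | zero => simp
    | succ k ih =>
      intro h
      have e : h + (k + 1) * r = (h + k * r) + r := by ring
      rw [e, hper, ih]
    | pred k ih =>
      intro h
      have e : (h + (-k - 1) * r) + r = h + (-k) * r := by ring
      have := hper (h + (-k - 1) * r)
      rw [e, ih] at this
      exact this.symm
  set N := r.natAbs with hN
  have hN0 : N ≠ 0 := Int.natAbs_ne_zero.mpr hr
  set t := N.factorization 2 with ht
  set m := N / 2 ^ t with hm
  have hmul : 2 ^ t * m = N := Nat.ordProj_mul_ordCompl_eq_self N 2
  have hmodd : ¬ (2 ∣ m) := Nat.not_dvd_ordCompl (by norm_num) hN0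
  obtain ⟨h0, hAlt⟩ := halt t
  have hkey := hAlt (m : ℤ)
  have hnev : ¬ Even ((m : ℤ)) := by
    rw [Int.even_coe_nat]
    exact fun he => hmodd he.two_dvd
  rw [if_neg hnev] at hkey
  -- m * 2^(t+1) = 2 * N
  have heq : (m : ℤ) * 2 ^ (t + 1) = 2 * (N : ℤ) := by
    have : ((2 ^ t * m : ℕ) : ℤ) = (N : ℤ) := by exact_mod_cast hmul
    push_cast at this
    rw [pow_succ]
    linarith [this]
  have habs : (N : ℤ) = r ∨ (N : ℤ) = -r := by
    rcases Int.natAbs_eq r with h | h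
    · left; omega
    · right; omega
  have hsame : a (h0 + (m : ℤ) * 2 ^ (t + 1)) = a h0 := by
    rw [heq]
    rcases habs with h | h
    · rw [h]; exact hper' 2 h0
    · rw [h]
      have e : h0 + 2 * (-r) = h0 + (-2) * r := by ring
      rw [e]; exact hper' (-2) h0
  rw [hkey] at hsame
  have h0val := hpm h0
  omega
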